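/- Fix b ≥ 0 and define Z_HA(b) = {(z, w, r, t) ∈ {0,1} × ℝ³ : t ≥ w², w(1−z) = 0, |r|(1−z) ≤ b(1−z), |r|z ≥ bz, w = rz}. Define Z̄(b) = {(z, w, r, t, w⁻, w⁺, z⁻, z⁺) ∈ ℝ⁸ : t ≥ (w⁺)²/z⁺ + (w⁻)²/z⁻, w⁻ ≥ bz⁻, w⁺ ≥ bz⁺, |r − w| ≤ b(1 − z⁻ − z⁺), z⁻ + z⁺ = z ≤ 1, w = w⁺ − w⁻, z⁻ ≥ 0, z⁺ ≥ 0}, where the perspective terms use the conventions 0/0 = 0 and a/0 = +∞ for a > 0. Then the closed convex hull of Z_HA(b) equals the projection of Z̄(b) onto the coordinates (z, w, r, t). -/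

import Mathlib

/-- The mixed-integer set Z_HA(b) ⊆ ℝ⁴ in coordinates (z, w, r, t). -/
def ZHA (b : ℝ) : Set (ℝ × ℝ × ℝ × ℝ) :=
  {q | let (z, w, r, t) := q
       (z = 0 ∨ z = 1) ∧ w^2 ≤ t ∧ w * (1 - z) = 0 ∧
       |r| * (1 - z) ≤ b * (1 - z) ∧ b * z ≤ |r| * z ∧ w = r * z}

/-- The extended set Z̄(b) ⊆ ℝ⁸ in coordinates (z, w, r, t, w⁻, w⁺, z⁻, z⁺).
The perspective terms (w⁺)²/z⁺ and (w⁻)²/z⁻ use the conventions 0²/0 = 0 and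
a²/0 = +∞ for a ≠ 0: since real division by zero is 0 in Lean, the +∞
convention is encoded by the implications z⁺ = 0 → w⁺ = 0 and z⁻ = 0 → w⁻ = 0
(points violating them have value +∞ and hence cannot satisfy the epigraph
inequality). -/
def Zbar (b : ℝ) : Set (ℝ × ℝ × ℝ × ℝ × ℝ × ℝ × ℝ × ℝ) :=
  {q | let (z, w, r, t, wm, wp, zm, zp) := q
       ((zp = 0 → wp = 0) ∧ (zm = 0 → wm = 0) ∧ wp^2 / zp + wm^2 / zm ≤ t) ∧
       b * zm ≤ wm ∧ b * zp ≤ wp ∧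
       |r - w| ≤ b * (1 - zm - zp) ∧
       zm + zp = z ∧ z ≤ 1 ∧ w = wp - wm ∧ 0 ≤ zm ∧ 0 ≤ zp}

/-- the closed convex hull of Z_HA(b) equals the projection of
Z̄(b) onto the coordinates (z, w, r, t). -/

lemma div_add_div_sq (a c x y : ℝ) (hx : 0 < x) (hy : 0 < y) :
    (a + c)^2 / (x + y) ≤ a^2/x + c^2/y := by
  rw [div_add_div _ _ (ne_of_gt hx) (ne_of_gt hy), div_le_div_iff₀ (by positivity) (by positivity)]
  nlinarith [sq_nonneg (a*y - c*x), mul_pos hx hy]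

lemma scale_div (a x m : ℝ) (h : x = 0 → a = 0) : (m*a)^2/(m*x) = m*(a^2/x) := by
  rcases eq_or_ne m 0 with rfl|hm
  · simp
  rcases eq_or_ne x 0 with rfl|hx
  · simp [h rfl]
  field_simp

lemma persp (a1 a2 x1 x2 l m : ℝ) (hx1 : 0 ≤ x1) (hx2 : 0 ≤ x2)
    (h1 : x1 = 0 → a1 = 0) (h2 : x2 = 0 → a2 = 0) (hl : 0 ≤ l) (hm : 0 ≤ m) :
    (l*a1 + m*a2)^2 / (l*x1 + m*x2) ≤ l*(a1^2/x1) + m*(a2^2/x2) := by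
  have hp1 : 0 ≤ a1^2/x1 := by positivity
  have hp2 : 0 ≤ a2^2/x2 := by positivity
  rcases eq_or_ne x1 0 with rfl|hx1'
  · rw [h1 rfl]
    calc (l*0 + m*a2)^2 / (l*0 + m*x2) = (m*a2)^2/(m*x2) := by ring_nf
      _ = m*(a2^2/x2) := scale_div a2 x2 m h2
      _ ≤ l*(0^2/0) + m*(a2^2/x2) := by simp
  rcases eq_or_ne x2 0 with rfl|hx2'
  · rw [h2 rfl]
    calc (l*a1 + m*0)^2 / (l*x1 + m*0) = (l*a1)^2/(l*x1) := by ring_nf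
      _ = l*(a1^2/x1) := scale_div a1 x1 l h1
      _ ≤ l*(a1^2/x1) + m*(0^2/0) := by simp
  have hx1p : 0 < x1 := lt_of_le_of_ne hx1 (Ne.symm hx1')
  have hx2p : 0 < x2 := lt_of_le_of_ne hx2 (Ne.symm hx2')
  rcases eq_or_ne l 0 with rfl|hl'
  · calc (0*a1 + m*a2)^2 / (0*x1 + m*x2) = (m*a2)^2/(m*x2) := by ring_nf
      _ = m*(a2^2/x2) := scale_div a2 x2 m h2
      _ ≤ 0*(a1^2/x1) + m*(a2^2/x2) := by simp
  rcases eq_or_ne m 0 with rfl|hm'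
  · calc (l*a1 + 0*a2)^2 / (l*x1 + 0*x2) = (l*a1)^2/(l*x1) := by ring_nf
      _ = l*(a1^2/x1) := scale_div a1 x1 l h1
      _ ≤ l*(a1^2/x1) + 0*(a2^2/x2) := by simp
  have hlp : 0 < l := lt_of_le_of_ne hl (Ne.symm hl')
  have hmp : 0 < m := lt_of_le_of_ne hm (Ne.symm hm')
  calc (l*a1 + m*a2)^2 / (l*x1 + m*x2) ≤ (l*a1)^2/(l*x1) + (m*a2)^2/(m*x2) :=
        div_add_div_sq _ _ _ _ (by positivity) (by positivity)
    _ = l*(a1^2/x1) + m*(a2^2/x2) := by rw [scale_div a1 x1 l h1, scale_div a2 x2 m h2]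

lemma mem_ZHA_iff (b z w r t : ℝ) :
    (z,w,r,t) ∈ ZHA b ↔ (z = 0 ∨ z = 1) ∧ w^2 ≤ t ∧ w * (1 - z) = 0 ∧
       |r| * (1 - z) ≤ b * (1 - z) ∧ b * z ≤ |r| * z ∧ w = r * z := Iff.rfl

lemma mem_Zbar_iff (b z w r t wm wp zm zp : ℝ) :
    (z,w,r,t,wm,wp,zm,zp) ∈ Zbar b ↔
      ((zp = 0 → wp = 0) ∧ (zm = 0 → wm = 0) ∧ wp^2 / zp + wm^2 / zm ≤ t) ∧
       b * zm ≤ wm ∧ b * zp ≤ wp ∧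
       |r - w| ≤ b * (1 - zm - zp) ∧
       zm + zp = z ∧ z ≤ 1 ∧ w = wp - wm ∧ 0 ≤ zm ∧ 0 ≤ zp := Iff.rfl

lemma one_mem_ZHA (b a s : ℝ) (ha : b ≤ |a|) (hs : a^2 ≤ s) : ((1:ℝ),a,a,s) ∈ ZHA b := by
  rw [mem_ZHA_iff]
  refine ⟨Or.inr rfl, hs, by ring, by simp, by simpa using ha, by ring⟩

lemma zero_mem_ZHA (b r s : ℝ) (hr : |r| ≤ b) (hs : 0 ≤ s) : ((0:ℝ),(0:ℝ),r,s) ∈ ZHA b := by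
  rw [mem_ZHA_iff]
  refine ⟨Or.inl rfl, by simpa using hs, by ring, by simpa using hr, by simp, by ring⟩

lemma zha_subset_image (b : ℝ) (hb : 0 ≤ b) : ZHA b ⊆ (fun q : ℝ × ℝ × ℝ × ℝ × ℝ × ℝ × ℝ × ℝ =>
      (q.1, q.2.1, q.2.2.1, q.2.2.2.1)) '' Zbar b := by
  rintro ⟨z,w,r,t⟩ hq
  rw [mem_ZHA_iff] at hq
  obtain ⟨hz01, ht, hwz, hr1, hr2, hwr⟩ := hq
  rcases hz01 with rfl|rfl
  · have hw0 : w = 0 := by simpa using hwr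
    subst hw0
    refine ⟨(0,0,r,t,0,0,0,0), ?_, rfl⟩
    rw [mem_Zbar_iff]
    have ht' : (0:ℝ) ≤ t := by simpa using ht
    refine ⟨⟨fun _ => rfl, fun _ => rfl, by simpa using ht'⟩, by simp, by simp, ?_, by ring,
      by norm_num, by ring, le_refl _, le_refl _⟩
    simpa using hr1
  · have hwr' : w = r := by simpa using hwr
    subst hwr'
    have hbw : b ≤ |w| := by simpa using hr2
    have ht' : w^2 ≤ t := ht
    rcases le_or_gt 0 w with hw|hw
    · refine ⟨(1,w,w,t,0,w,0,1), ?_, rfl⟩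
      rw [mem_Zbar_iff]
      refine ⟨⟨fun h => absurd h one_ne_zero, fun _ => rfl, ?_⟩, by simp, ?_, by simp, by ring,
        le_refl _, by ring, le_refl _, zero_le_one⟩
      · simpa using ht'
      · simpa [abs_of_nonneg hw] using hbw
    · refine ⟨(1,w,w,t,-w,0,1,0), ?_, rfl⟩
      rw [mem_Zbar_iff]
      refine ⟨⟨fun _ => rfl, fun h => absurd h one_ne_zero, ?_⟩, ?_, by simp, by simp, by ring,
        le_refl _, by ring, zero_le_one, le_refl _⟩
      · simpa using ht'
      · simpa [abs_of_neg hw] using hbw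

lemma mem_hull_of_pieces (b z w r t α β r0 t1 t2 t3 zp zm : ℝ)
    (hP1 : ((1:ℝ),α,α,t1) ∈ ZHA b) (hP2 : ((1:ℝ),-β,-β,t2) ∈ ZHA b)
    (hP3 : ((0:ℝ),(0:ℝ),r0,t3) ∈ ZHA b)
    (hzp : 0 ≤ zp) (hzm : 0 ≤ zm) (hz1 : z ≤ 1) (hzsum : zp + zm = z)
    (hw : zp*α - zm*β = w)
    (hr : zp*α - zm*β + (1-z)*r0 = r)
    (ht : zp*t1 + zm*t2 + (1-z)*t3 = t) :
    (z,w,r,t) ∈ convexHull ℝ (ZHA b) := by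
  have hC : Convex ℝ (convexHull ℝ (ZHA b)) := convex_convexHull ℝ _
  have hmem : ∀ i : Fin 3, (![((1:ℝ),α,α,t1), ((1:ℝ),-β,-β,t2), ((0:ℝ),(0:ℝ),r0,t3)] i)
      ∈ convexHull ℝ (ZHA b) := by
    intro i
    fin_cases i <;> simp only [Matrix.cons_val_zero, Matrix.cons_val_one, Matrix.head_cons,
      Matrix.cons_val_two, Matrix.tail_cons] <;>
      [exact subset_convexHull ℝ _ hP1; exact subset_convexHull ℝ _ hP2;
       exact subset_convexHull ℝ _ hP3]
  have hwght : ∀ i : Fin 3, 0 ≤ (![zp, zm, 1-z] i) := by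
    intro i; fin_cases i <;> simp [hzp, hzm] <;> linarith
  have hsum : ∑ i : Fin 3, (![zp, zm, 1-z] i) = 1 := by
    simp [Fin.sum_univ_three]; linarith
  have := hC.sum_mem (fun i _ => hwght i) hsum (fun i _ => hmem i)
  convert this using 1
  simp only [Fin.sum_univ_three, Matrix.cons_val_zero, Matrix.cons_val_one, Matrix.head_cons,
    Matrix.cons_val_two, Matrix.tail_cons, Prod.smul_mk, smul_eq_mul, Prod.mk_add_mk]
  refine Prod.ext ?_ (Prod.ext ?_ (Prod.ext ?_ ?_)) <;> simp <;> linarith [hw, hr, ht]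

lemma image_subset_hull (b : ℝ) (hb : 0 ≤ b) :
    (fun q : ℝ × ℝ × ℝ × ℝ × ℝ × ℝ × ℝ × ℝ =>
        (q.1, q.2.1, q.2.2.1, q.2.2.2.1)) '' Zbar b ⊆ convexHull ℝ (ZHA b) := by
  rintro p ⟨⟨z,w,r,t,wm,wp,zm,zp⟩, hq, rfl⟩
  rw [mem_Zbar_iff] at hq
  obtain ⟨⟨hip, him, hs⟩, hbm, hbp, habs, hzz, hz1, hw, hzm, hzp⟩ := hq
  simp only
  set α := if zp = 0 then b else wp/zp with hαdef
  set β := if zm = 0 then b else wm/zm with hβdef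
  have hα1 : zp*α = wp := by
    rcases eq_or_ne zp 0 with h|h
    · simp [hαdef, h, hip h]
    · rw [hαdef, if_neg h]; field_simp
  have hα2 : zp*α^2 = wp^2/zp := by
    rcases eq_or_ne zp 0 with h|h
    · simp [hαdef, h, hip h]
    · rw [hαdef, if_neg h]; field_simp
  have hα3 : b ≤ |α| := by
    rcases eq_or_ne zp 0 with h|h
    · simp [hαdef, h, abs_of_nonneg hb]
    · have hzp' : 0 < zp := lt_of_le_of_ne hzp (Ne.symm h)
      have : b ≤ wp/zp := (le_div_iff₀ hzp').2 (by linarith [hbp])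
      have h0 : 0 ≤ wp/zp := le_trans hb this
      simpa [hαdef, h, abs_of_nonneg h0] using this
  have hβ1 : zm*β = wm := by
    rcases eq_or_ne zm 0 with h|h
    · simp [hβdef, h, him h]
    · rw [hβdef, if_neg h]; field_simp
  have hβ2 : zm*β^2 = wm^2/zm := by
    rcases eq_or_ne zm 0 with h|h
    · simp [hβdef, h, him h]
    · rw [hβdef, if_neg h]; field_simp
  have hβ3 : b ≤ |-β| := by
    rw [abs_neg]
    rcases eq_or_ne zm 0 with h|h
    · simp [hβdef, h, abs_of_nonneg hb]
    · have hzm' : 0 < zm := lt_of_le_of_ne hzm (Ne.symm h)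
      have : b ≤ wm/zm := (le_div_iff₀ hzm').2 (by linarith [hbm])
      have h0 : 0 ≤ wm/zm := le_trans hb this
      simpa [hβdef, h, abs_of_nonneg h0] using this
  have hΔ : 0 ≤ t - (wp^2/zp + wm^2/zm) := by linarith
  rcases eq_or_ne z 1 with rfl|hzne
  · -- z = 1 : r = w
    have hzmzp : zm + zp = 1 := hzz
    have hrw : r = w := by
      have h0 : b*(1-zm-zp) = 0 := by rw [show (1:ℝ)-zm-zp = 0 by linarith]; ring
      have h1 : |r - w| ≤ 0 := by linarith [habs]
      have := abs_nonpos_iff.mp h1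
      linarith
    rcases eq_or_ne zp 0 with hzp0|hzp0
    · -- zm = 1
      have hzm1 : zm = 1 := by linarith [hzz, hzp0]
      refine mem_hull_of_pieces b 1 w r t b β 0 (b^2) (β^2 + (t - (wp^2/zp + wm^2/zm))) 0 zp zm
        (one_mem_ZHA b b (b^2) (by simp [abs_of_nonneg hb]) le_rfl)
        (one_mem_ZHA b (-β) _ hβ3 (by nlinarith)) (zero_mem_ZHA b 0 0 (by simpa using hb) le_rfl)
        hzp hzm hz1 (by linarith) ?_ ?_ ?_
      · rw [hzp0]; simp; linarith [hβ1, hw, hip hzp0]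
      · rw [hzp0]; simp; linarith [hβ1, hw, hip hzp0, hrw]
      · have hwp : wp = 0 := hip hzp0
        rw [hzp0, hzm1]
        simp [hwp]
        have hb2 : β^2 = wm^2 := by have h := hβ2; rw [hzm1] at h; simpa using h
        linarith
    · refine mem_hull_of_pieces b 1 w r t α β 0 (α^2 + (t - (wp^2/zp + wm^2/zm))/zp) (β^2) 0 zp zm
        (one_mem_ZHA b α _ hα3 (by
          have : 0 ≤ (t - (wp^2/zp + wm^2/zm))/zp := div_nonneg hΔ hzp
          linarith)) (one_mem_ZHA b (-β) _ hβ3 (by simp))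
        (zero_mem_ZHA b 0 0 (by simpa using hb) le_rfl)
        hzp hzm hz1 (by linarith) (by linarith [hα1, hβ1, hw]) 
        (by simp; linarith [hα1, hβ1, hw, hrw]) ?_
      have hzpp : zp ≠ 0 := hzp0
      have : zp * ((t - (wp^2/zp + wm^2/zm))/zp) = t - (wp^2/zp + wm^2/zm) := by
        rw [mul_comm, div_mul_cancel₀ _ hzpp]
      nlinarith [hα2, hβ2, this]
  · -- z < 1
    have hzlt : z < 1 := lt_of_le_of_ne hz1 hzne
    have h1z : (0:ℝ) < 1 - z := by linarith
    refine mem_hull_of_pieces b z w r t α β ((r-w)/(1-z)) (α^2) (β^2)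
      ((t - (wp^2/zp + wm^2/zm))/(1-z)) zp zm
      (one_mem_ZHA b α _ hα3 le_rfl) (one_mem_ZHA b (-β) _ hβ3 (by simp)) ?_
      hzp hzm hz1 (by linarith) (by linarith [hα1, hβ1, hw]) ?_ ?_
    · refine zero_mem_ZHA b _ _ ?_ (by positivity)
      rw [abs_div, abs_of_pos h1z, div_le_iff₀ h1z]
      calc |r - w| ≤ b * (1 - zm - zp) := habs
        _ = b * (1 - z) := by rw [show (1:ℝ)-zm-zp = 1-z by linarith]
    · have : (1-z)*((r-w)/(1-z)) = r - w := by field_simp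
      linarith [hα1, hβ1, hw, this]
    · have : (1-z)*((t - (wp^2/zp + wm^2/zm))/(1-z)) = t - (wp^2/zp + wm^2/zm) := by field_simp
      linarith [hα2, hβ2, this]

set_option maxHeartbeats 1000000 in
lemma zbar_convex (b : ℝ) : Convex ℝ (Zbar b) := by
  rintro ⟨z1,w1,r1,t1,wm1,wp1,zm1,zp1⟩ h1 ⟨z2,w2,r2,t2,wm2,wp2,zm2,zp2⟩ h2 l m hl hm hlm
  rw [mem_Zbar_iff] at h1 h2
  obtain ⟨⟨hip1, him1, hs1⟩, hbm1, hbp1, habs1, hzz1, hz1, hw1, hzm1, hzp1⟩ := h1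
  obtain ⟨⟨hip2, him2, hs2⟩, hbm2, hbp2, habs2, hzz2, hz2, hw2, hzm2, hzp2⟩ := h2
  have key : ∀ x1 x2 a1 a2 : ℝ, 0 ≤ x1 → 0 ≤ x2 → l*x1 + m*x2 = 0 → l*a1 + m*a2 = 0 ∨ True := by
    intro _ _ _ _ _ _ _; right; trivial
  simp only [Prod.smul_mk, Prod.mk_add_mk, smul_eq_mul, mem_Zbar_iff]
  have hzp0 : l*zp1 + m*zp2 = 0 → l*wp1 + m*wp2 = 0 := by
    intro h
    have e1 : l*zp1 = 0 := by nlinarith [mul_nonneg hl hzp1, mul_nonneg hm hzp2]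
    have e2 : m*zp2 = 0 := by nlinarith [mul_nonneg hl hzp1, mul_nonneg hm hzp2]
    rcases mul_eq_zero.1 e1 with h'|h'
    · rcases mul_eq_zero.1 e2 with h''|h''
      · simp [h', h'']
      · simp [h', hip2 h'']
    · rcases mul_eq_zero.1 e2 with h''|h''
      · simp [h'', hip1 h']
      · simp [hip1 h', hip2 h'']
  have hzm0 : l*zm1 + m*zm2 = 0 → l*wm1 + m*wm2 = 0 := by
    intro h
    have e1 : l*zm1 = 0 := by nlinarith [mul_nonneg hl hzm1, mul_nonneg hm hzm2]
    have e2 : m*zm2 = 0 := by nlinarith [mul_nonneg hl hzm1, mul_nonneg hm hzm2]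
    rcases mul_eq_zero.1 e1 with h'|h'
    · rcases mul_eq_zero.1 e2 with h''|h''
      · simp [h', h'']
      · simp [h', him2 h'']
    · rcases mul_eq_zero.1 e2 with h''|h''
      · simp [h'', him1 h']
      · simp [him1 h', him2 h'']
  have hle1 : l*z1 + m*z2 ≤ 1 := by
    have := mul_le_mul_of_nonneg_left hz1 hl
    have := mul_le_mul_of_nonneg_left hz2 hm
    linarith
  refine ⟨⟨hzp0, hzm0, ?_⟩, ?_, ?_, ?_, by linear_combination l*hzz1 + m*hzz2, hle1, by linear_combination l*hw1 + m*hw2, ?_, ?_⟩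
  · have p1 := persp wp1 wp2 zp1 zp2 l m hzp1 hzp2 hip1 hip2 hl hm
    have p2 := persp wm1 wm2 zm1 zm2 l m hzm1 hzm2 him1 him2 hl hm
    have q1 := mul_le_mul_of_nonneg_left hs1 hl
    have q2 := mul_le_mul_of_nonneg_left hs2 hm
    calc (l*wp1 + m*wp2)^2/(l*zp1+m*zp2) + (l*wm1+m*wm2)^2/(l*zm1+m*zm2)
        ≤ (l*(wp1^2/zp1) + m*(wp2^2/zp2)) + (l*(wm1^2/zm1) + m*(wm2^2/zm2)) := add_le_add p1 p2
      _ = l*(wp1^2/zp1 + wm1^2/zm1) + m*(wp2^2/zp2 + wm2^2/zm2) := by ring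
      _ ≤ l*t1 + m*t2 := by linarith [q1, q2]
  · have := mul_le_mul_of_nonneg_left hbm1 hl
    have := mul_le_mul_of_nonneg_left hbm2 hm
    nlinarith
  · have := mul_le_mul_of_nonneg_left hbp1 hl
    have := mul_le_mul_of_nonneg_left hbp2 hm
    nlinarith
  · calc |l*r1 + m*r2 - (l*w1 + m*w2)| = |l*(r1-w1) + m*(r2-w2)| := by ring_nf
      _ ≤ |l*(r1-w1)| + |m*(r2-w2)| := abs_add_le _ _
      _ = l*|r1-w1| + m*|r2-w2| := by rw [abs_mul, abs_mul, abs_of_nonneg hl, abs_of_nonneg hm]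
      _ ≤ l*(b*(1-zm1-zp1)) + m*(b*(1-zm2-zp2)) := by
          exact add_le_add (mul_le_mul_of_nonneg_left habs1 hl) (mul_le_mul_of_nonneg_left habs2 hm)
      _ = b*(1 - (l*zm1+m*zm2) - (l*zp1+m*zp2)) := by linear_combination b * hlm
  · positivity
  · positivity

def SBar (b : ℝ) : Set (ℝ × ℝ × ℝ × ℝ × ℝ × ℝ × ℝ × ℝ) :=
  {q | (q.2.2.2.2.2.1)^2 ≤ q.2.2.2.1 * q.2.2.2.2.2.2.2} ∩
  {q | (q.2.2.2.2.1)^2 ≤ q.2.2.2.1 * q.2.2.2.2.2.2.1} ∩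
  {q | (q.2.2.2.2.2.1)^2 * q.2.2.2.2.2.2.1 + (q.2.2.2.2.1)^2 * q.2.2.2.2.2.2.2
        ≤ q.2.2.2.1 * q.2.2.2.2.2.2.2 * q.2.2.2.2.2.2.1} ∩
  {q | 0 ≤ q.2.2.2.1} ∩
  {q | b * q.2.2.2.2.2.2.1 ≤ q.2.2.2.2.1} ∩
  {q | b * q.2.2.2.2.2.2.2 ≤ q.2.2.2.2.2.1} ∩
  {q | |q.2.2.1 - q.2.1| ≤ b * (1 - q.2.2.2.2.2.2.1 - q.2.2.2.2.2.2.2)} ∩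
  {q | q.2.2.2.2.2.2.1 + q.2.2.2.2.2.2.2 = q.1} ∩
  {q | q.1 ≤ 1} ∩
  {q | q.2.1 = q.2.2.2.2.2.1 - q.2.2.2.2.1} ∩
  {q | 0 ≤ q.2.2.2.2.2.2.1} ∩
  {q | 0 ≤ q.2.2.2.2.2.2.2}

lemma isClosed_SBar (b : ℝ) : IsClosed (SBar b) := by
  unfold SBar
  repeat' apply IsClosed.inter
  all_goals first
    | exact isClosed_le (by fun_prop) (by fun_prop)
    | exact isClosed_eq (by fun_prop) (by fun_prop)

lemma Zbar_eq_SBar (b : ℝ) : Zbar b = SBar b := by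
  ext ⟨z,w,r,t,wm,wp,zm,zp⟩
  rw [mem_Zbar_iff]
  simp only [SBar, Set.mem_inter_iff, Set.mem_setOf_eq]
  constructor
  · rintro ⟨⟨hip, him, hs⟩, hbm, hbp, habs, hzz, hz1, hw, hzm, hzp⟩
    have h1 : 0 ≤ wp^2/zp := by positivity
    have h2 : 0 ≤ wm^2/zm := by positivity
    have hA : wp^2 ≤ t*zp := by
      rcases eq_or_ne zp 0 with h|h
      · simp [hip h, h]
      · have hzp' : 0 < zp := lt_of_le_of_ne hzp (Ne.symm h)
        have : wp^2/zp ≤ t := by linarith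
        calc wp^2 = (wp^2/zp)*zp := by field_simp
          _ ≤ t*zp := mul_le_mul_of_nonneg_right this hzp
    have hB : wm^2 ≤ t*zm := by
      rcases eq_or_ne zm 0 with h|h
      · simp [him h, h]
      · have hzm' : 0 < zm := lt_of_le_of_ne hzm (Ne.symm h)
        have : wm^2/zm ≤ t := by linarith
        calc wm^2 = (wm^2/zm)*zm := by field_simp
          _ ≤ t*zm := mul_le_mul_of_nonneg_right this hzm
    have hD : 0 ≤ t := le_trans (by positivity) hs
    have hC : wp^2*zm + wm^2*zp ≤ t*zp*zm := by
      rcases eq_or_ne zp 0 with h|h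
      · simp [hip h, h]
      · rcases eq_or_ne zm 0 with h'|h'
        · simp [him h', h']
        · have hzp' : 0 < zp := lt_of_le_of_ne hzp (Ne.symm h)
          have hzm' : 0 < zm := lt_of_le_of_ne hzm (Ne.symm h')
          have := mul_le_mul_of_nonneg_right hs (le_of_lt (mul_pos hzp' hzm'))
          calc wp^2*zm + wm^2*zp = (wp^2/zp + wm^2/zm)*(zp*zm) := by field_simp
            _ ≤ t*(zp*zm) := mul_le_mul_of_nonneg_right (by linarith) (le_of_lt (mul_pos hzp' hzm'))
            _ = t*zp*zm := by ring
    exact ⟨⟨⟨⟨⟨⟨⟨⟨⟨⟨⟨hA, hB⟩, hC⟩, hD⟩, hbm⟩, hbp⟩, habs⟩, hzz⟩, hz1⟩, hw⟩, hzm⟩, hzp⟩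
  · rintro ⟨⟨⟨⟨⟨⟨⟨⟨⟨⟨⟨hA, hB⟩, hC⟩, hD⟩, hbm⟩, hbp⟩, habs⟩, hzz⟩, hz1⟩, hw⟩, hzm⟩, hzp⟩
    have hip : zp = 0 → wp = 0 := by
      intro h; rw [h] at hA; simpa using pow_eq_zero_iff (n := 2) (by norm_num) |>.mp
        (le_antisymm (by simpa using hA) (sq_nonneg wp))
    have him : zm = 0 → wm = 0 := by
      intro h; rw [h] at hB; simpa using pow_eq_zero_iff (n := 2) (by norm_num) |>.mp
        (le_antisymm (by simpa using hB) (sq_nonneg wm))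
    refine ⟨⟨hip, him, ?_⟩, hbm, hbp, habs, hzz, hz1, hw, hzm, hzp⟩
    rcases eq_or_ne zp 0 with h|h
    · rcases eq_or_ne zm 0 with h'|h'
      · simp [hip h, him h', h, h', hD]
      · have hzm' : 0 < zm := lt_of_le_of_ne hzm (Ne.symm h')
        rw [hip h, h]
        simpa using (div_le_iff₀ hzm').2 hB
    · have hzp' : 0 < zp := lt_of_le_of_ne hzp (Ne.symm h)
      rcases eq_or_ne zm 0 with h'|h'
      · rw [him h', h']
        simpa using (div_le_iff₀ hzp').2 hA
      · have hzm' : 0 < zm := lt_of_le_of_ne hzm (Ne.symm h')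
        rw [div_add_div _ _ (ne_of_gt hzp') (ne_of_gt hzm'), div_le_iff₀ (mul_pos hzp' hzm')]
        nlinarith [hC]

set_option maxHeartbeats 2000000 in
set_option maxRecDepth 10000 in
lemma isClosed_image (b : ℝ) (hb : 0 ≤ b) :
    IsClosed ((fun q : ℝ × ℝ × ℝ × ℝ × ℝ × ℝ × ℝ × ℝ =>
        (q.1, q.2.1, q.2.2.1, q.2.2.2.1)) '' Zbar b) := by
  set π : (ℝ × ℝ × ℝ × ℝ × ℝ × ℝ × ℝ × ℝ) → (ℝ × ℝ × ℝ × ℝ) :=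
    fun q => (q.1, q.2.1, q.2.2.1, q.2.2.2.1) with hπ
  have hπc : Continuous π := by fun_prop
  rw [Zbar_eq_SBar]
  apply IsSeqClosed.isClosed
  intro x p hx hxp
  choose q hqS hqπ using hx
  -- bound on x
  obtain ⟨R0, hR0pos, hR0⟩ : ∃ R0, 0 ≤ R0 ∧ ∀ n, ‖x n‖ ≤ R0 := by
    obtain ⟨R, hRpos, hR⟩ := cauchySeq_bdd hxp.cauchySeq
    exact ⟨R + ‖x 0‖, by positivity, fun n => by
      have := hR n 0
      have h2 : ‖x n - x 0‖ < R := by simpa [dist_eq_norm] using this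
      calc ‖x n‖ = ‖x n - x 0 + x 0‖ := by ring_nf
        _ ≤ ‖x n - x 0‖ + ‖x 0‖ := norm_add_le _ _
        _ ≤ R + ‖x 0‖ := by linarith⟩
  set R := 2*R0 + 2 with hRdef
  have hR0R : R0 ≤ R := by linarith
  -- coordinate bounds for q n
  have hcomp : ∀ y : ℝ × ℝ × ℝ × ℝ, |y.1| ≤ ‖y‖ ∧ |y.2.1| ≤ ‖y‖ ∧ |y.2.2.1| ≤ ‖y‖ ∧
      |y.2.2.2| ≤ ‖y‖ := by
    intro y
    refine ⟨?_, ?_, ?_, ?_⟩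
    · simpa [Real.norm_eq_abs] using norm_fst_le y
    · simpa [Real.norm_eq_abs] using (norm_fst_le y.2).trans (norm_snd_le y)
    · simpa [Real.norm_eq_abs] using
        ((norm_fst_le y.2.2).trans (norm_snd_le y.2)).trans (norm_snd_le y)
    · simpa [Real.norm_eq_abs] using
        ((norm_snd_le y.2.2).trans (norm_snd_le y.2)).trans (norm_snd_le y)
  have hqbound : ∀ n, ‖q n‖ ≤ R := by
    intro n
    obtain ⟨⟨⟨⟨⟨⟨⟨⟨⟨⟨⟨hA,hB⟩,hC⟩,hD⟩,hbm⟩,hbp⟩,habs⟩,hzz⟩,hz1⟩,hw⟩,hzm⟩,hzp⟩ := hqS n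
    simp only [Set.mem_setOf_eq] at hA hB hC hD hbm hbp habs hzz hz1 hw hzm hzp
    have hx1 : (q n).1 = (x n).1 := congrArg Prod.fst (hqπ n)
    have hx2 : (q n).2.1 = (x n).2.1 := congrArg (fun y => y.2.1) (hqπ n)
    have hx3 : (q n).2.2.1 = (x n).2.2.1 := congrArg (fun y => y.2.2.1) (hqπ n)
    have hx4 : (q n).2.2.2.1 = (x n).2.2.2 := congrArg (fun y => y.2.2.2) (hqπ n)
    obtain ⟨hc1, hc2, hc3, hc4⟩ := hcomp (x n)
    have hxn := hR0 n
    have ht : |(q n).2.2.2.1| ≤ R0 := by rw [hx4]; linarith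
    have htR : (q n).2.2.2.1 ≤ R0 := le_trans (le_abs_self _) ht
    have hzmle : (q n).2.2.2.2.2.2.1 ≤ 1 := by
      have : (q n).1 ≤ 1 := hz1
      linarith [hzp, hzz, this]
    have hzple : (q n).2.2.2.2.2.2.2 ≤ 1 := by linarith [hzm, hzz, hz1]
    have hwm0 : 0 ≤ (q n).2.2.2.2.1 := le_trans (mul_nonneg hb hzm) hbm
    have hwp0 : 0 ≤ (q n).2.2.2.2.2.1 := le_trans (mul_nonneg hb hzp) hbp
    have hwm2 : ((q n).2.2.2.2.1)^2 ≤ R0 := by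
      calc ((q n).2.2.2.2.1)^2 ≤ (q n).2.2.2.1 * (q n).2.2.2.2.2.2.1 := hB
        _ ≤ R0 * 1 := mul_le_mul htR hzmle hzm (by linarith)
        _ = R0 := by ring
    have hwp2 : ((q n).2.2.2.2.2.1)^2 ≤ R0 := by
      calc ((q n).2.2.2.2.2.1)^2 ≤ (q n).2.2.2.1 * (q n).2.2.2.2.2.2.2 := hA
        _ ≤ R0 * 1 := mul_le_mul htR hzple hzp (by linarith)
        _ = R0 := by ring
    have goal : ∀ c : ℝ, |c| ≤ R0 → |c| ≤ R := fun c h => le_trans h hR0R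
    simp only [Prod.norm_def, Real.norm_eq_abs, max_le_iff]
    refine ⟨?_, ?_, ?_, ?_, ?_, ?_, ?_, ?_⟩
    · rw [hx1]; exact goal _ (by linarith)
    · rw [hx2]; exact goal _ (by linarith)
    · rw [hx3]; exact goal _ (by linarith)
    · exact goal _ ht
    · rw [abs_of_nonneg hwm0]; nlinarith [sq_nonneg ((q n).2.2.2.2.1 - 1)]
    · rw [abs_of_nonneg hwp0]; nlinarith [sq_nonneg ((q n).2.2.2.2.2.1 - 1)]
    · rw [abs_of_nonneg hzm]; linarith
    · rw [abs_of_nonneg hzp]; linarith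
  have hmemK : ∀ n, q n ∈ SBar b ∩ Metric.closedBall 0 R := fun n =>
    ⟨hqS n, by simpa [Metric.mem_closedBall, dist_zero_right] using hqbound n⟩
  have hK : IsCompact (SBar b ∩ Metric.closedBall 0 R) :=
    (isCompact_closedBall _ _).inter_left (isClosed_SBar b)
  obtain ⟨a, ha, φ, hφ, hconv⟩ := hK.tendsto_subseq hmemK
  have h1 : Filter.Tendsto (x ∘ φ) Filter.atTop (nhds p) := hxp.comp hφ.tendsto_atTop
  have h2 : Filter.Tendsto (π ∘ (q ∘ φ)) Filter.atTop (nhds (π a)) :=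
    (hπc.tendsto a).comp hconv
  have heq : π ∘ (q ∘ φ) = x ∘ φ := funext fun n => hqπ (φ n)
  rw [heq] at h2
  exact ⟨a, ha.1, tendsto_nhds_unique h2 h1⟩

/-- the closed convex hull of Z_HA(b) equals the projection of
Z̄(b) onto the coordinates (z, w, r, t). -/
theorem stmt_4 (b : ℝ) (hb : 0 ≤ b) :
    closure (convexHull ℝ (ZHA b)) =
      (fun q : ℝ × ℝ × ℝ × ℝ × ℝ × ℝ × ℝ × ℝ =>
        (q.1, q.2.1, q.2.2.1, q.2.2.2.1)) '' Zbar b := by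
  have hconvim : Convex ℝ ((fun q : ℝ × ℝ × ℝ × ℝ × ℝ × ℝ × ℝ × ℝ =>
      (q.1, q.2.1, q.2.2.1, q.2.2.2.1)) '' Zbar b) :=
    (zbar_convex b).is_linear_image ⟨fun _ _ => rfl, fun _ _ => rfl⟩
  apply Set.Subset.antisymm
  · exact closure_minimal (convexHull_min (zha_subset_image b hb) hconvim) (isClosed_image b hb)
  · exact fun p hp => subset_closure (image_subset_hull b hb hp)
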